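/- Let J = diag(I₂, −I₂) (4×4) and let M = [[A,B],[C,D]] be a 4×4 complex matrix in 2×2 blocks satisfying M^* J M = J (i.e. M ∈ U(2,2), equivalently A^*A − C^*C = I, B^*B − D^*D = −I, A^*B − C^*D = 0). Then for every unitary 2×2 matrix U the matrix CU + D is invertible, and (AU + B)(CU + D)⁻¹ is unitary. Moreover this fractional linear assignment defines an action: for M, M′ ∈ U(2,2) the transformation associated to M·M′ is the composition of those associated to M and M′. -/

import Mathlib

noncomputable section

open Matrix

abbrev Mat2 := Matrix (Fin 2) (Fin 2) ℂ

/-- 4×4 matrices over ℂ written in 2×2 blocks. -/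
abbrev Mat22 := Matrix (Fin 2 ⊕ Fin 2) (Fin 2 ⊕ Fin 2) ℂ

/-- J = diag(I₂, −I₂). -/
def Jm : Mat22 := Matrix.fromBlocks 1 0 0 (-1)

/-- Membership in U(2,2): M^* J M = J. -/
def memU22 (M : Mat22) : Prop := Mᴴ * Jm * M = Jm

/-- The fractional linear transformation U ↦ (AU + B)(CU + D)⁻¹ associated with
a block matrix M = [[A,B],[C,D]]. -/
def fracAct (M : Mat22) (U : Mat2) : Mat2 :=
  (M.toBlocks₁₁ * U + M.toBlocks₁₂) * (M.toBlocks₂₁ * U + M.toBlocks₂₂)⁻¹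

/-- Block relations coming from membership in U(2,2). -/
lemma blocks_eq {M : Mat22} (h : memU22 M) :
    M.toBlocks₁₁ᴴ * M.toBlocks₁₁ - M.toBlocks₂₁ᴴ * M.toBlocks₂₁ = 1 ∧
    M.toBlocks₁₁ᴴ * M.toBlocks₁₂ - M.toBlocks₂₁ᴴ * M.toBlocks₂₂ = 0 ∧
    M.toBlocks₁₂ᴴ * M.toBlocks₁₁ - M.toBlocks₂₂ᴴ * M.toBlocks₂₁ = 0 ∧
    M.toBlocks₁₂ᴴ * M.toBlocks₁₂ - M.toBlocks₂₂ᴴ * M.toBlocks₂₂ = -1 := by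
  set A := M.toBlocks₁₁ with hA
  set B := M.toBlocks₁₂ with hB
  set C := M.toBlocks₂₁ with hC
  set D := M.toBlocks₂₂ with hD
  have hM : M = fromBlocks A B C D := (fromBlocks_toBlocks M).symm
  unfold memU22 Jm at h
  rw [hM] at h
  have hprod : (fromBlocks A B C D)ᴴ * fromBlocks (1 : Mat2) 0 0 (-1) * fromBlocks A B C D
      = fromBlocks (Aᴴ*A - Cᴴ*C) (Aᴴ*B - Cᴴ*D) (Bᴴ*A - Dᴴ*C) (Bᴴ*B - Dᴴ*D) := by
    simp [fromBlocks_conjTranspose, fromBlocks_multiply, sub_eq_add_neg]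
  rw [hprod] at h
  refine ⟨?_, ?_, ?_, ?_⟩
  · simpa using congrArg Matrix.toBlocks₁₁ h
  · simpa using congrArg Matrix.toBlocks₁₂ h
  · simpa using congrArg Matrix.toBlocks₂₁ h
  · simpa using congrArg Matrix.toBlocks₂₂ h

/-- M ∈ U(2,2) is invertible. -/
lemma isUnit_of_memU22 {M : Mat22} (h : memU22 M) : IsUnit M := by
  have hJ : Jm * Jm = 1 := by
    unfold Jm
    simp [fromBlocks_multiply, ← fromBlocks_one]
  refine (Matrix.isUnit_iff_isUnit_det _).mpr (Matrix.isUnit_det_of_left_inverse (B := Jm * Mᴴ * Jm) ?_)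
  have : Jm * (Mᴴ * Jm * M) = Jm * Jm := by rw [h]
  rw [hJ] at this
  calc Jm * Mᴴ * Jm * M = Jm * (Mᴴ * Jm * M) := by noncomm_ring
    _ = 1 := this

/-- The key identity: (AU+B)ᴴ(AU+B) = (CU+D)ᴴ(CU+D). -/
lemma key_identity {A B C D U : Mat2}
    (h1 : Aᴴ*A - Cᴴ*C = 1) (h2 : Aᴴ*B - Cᴴ*D = 0)
    (h3 : Bᴴ*A - Dᴴ*C = 0) (h4 : Bᴴ*B - Dᴴ*D = -1)
    (hU : Uᴴ * U = 1) :
    (A*U+B)ᴴ * (A*U+B) = (C*U+D)ᴴ * (C*U+D) := by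
  have expand : (A*U+B)ᴴ * (A*U+B) - (C*U+D)ᴴ * (C*U+D)
      = Uᴴ*(Aᴴ*A - Cᴴ*C)*U + Uᴴ*(Aᴴ*B - Cᴴ*D) + (Bᴴ*A - Dᴴ*C)*U + (Bᴴ*B - Dᴴ*D) := by
    simp only [conjTranspose_add, conjTranspose_mul]
    noncomm_ring
  rw [h1, h2, h3, h4] at expand
  have hz : (A*U+B)ᴴ * (A*U+B) - (C*U+D)ᴴ * (C*U+D) = 0 := by
    rw [expand]
    simp [hU]
  exact sub_eq_zero.mp hz

open scoped ComplexOrder in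
/-- CU+D is invertible. -/
lemma denom_isUnit {M : Mat22} (h : memU22 M) {U : Mat2}
    (hU : U ∈ Matrix.unitaryGroup (Fin 2) ℂ) :
    IsUnit (M.toBlocks₂₁ * U + M.toBlocks₂₂) := by
  set A := M.toBlocks₁₁
  set B := M.toBlocks₁₂
  set C := M.toBlocks₂₁
  set D := M.toBlocks₂₂
  obtain ⟨h1, h2, h3, h4⟩ := blocks_eq h
  have hUU : Uᴴ * U = 1 := by
    rw [← Matrix.star_eq_conjTranspose]
    exact (Matrix.mem_unitaryGroup_iff'.mp hU)
  have hkey := key_identity h1 h2 h3 h4 hUU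
  rw [Matrix.isUnit_iff_isUnit_det, isUnit_iff_ne_zero]
  intro hdet
  obtain ⟨v, hv, hv0⟩ := (Matrix.exists_mulVec_eq_zero_iff.mpr hdet)
  -- (AU+B)ᴴ(AU+B) v = 0
  have hP : (A*U+B) *ᵥ v = 0 := by
    have h0 : ((A*U+B)ᴴ * (A*U+B)) *ᵥ v = 0 := by
      rw [hkey, ← Matrix.mulVec_mulVec, hv0, Matrix.mulVec_zero]
    have hdp : star ((A*U+B) *ᵥ v) ⬝ᵥ ((A*U+B) *ᵥ v) = 0 := by
      rw [Matrix.star_mulVec, ← Matrix.dotProduct_mulVec, Matrix.mulVec_mulVec, h0,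
        dotProduct_zero]
    exact dotProduct_star_self_eq_zero.mp hdp
  -- hence M kills the nonzero vector (Uv, v)
  have hMv : M *ᵥ (Sum.elim (U *ᵥ v) v) = 0 := by
    have hM : M = fromBlocks A B C D := (fromBlocks_toBlocks M).symm
    rw [hM, Matrix.fromBlocks_mulVec]
    simp only [Sum.elim_comp_inl, Sum.elim_comp_inr]
    have e1 : A *ᵥ (U *ᵥ v) + B *ᵥ v = (A*U+B) *ᵥ v := by
      rw [Matrix.mulVec_mulVec, Matrix.add_mulVec]
    have e2 : C *ᵥ (U *ᵥ v) + D *ᵥ v = (C*U+D) *ᵥ v := by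
      rw [Matrix.mulVec_mulVec, Matrix.add_mulVec]
    rw [e1, e2, hP, hv0]
    ext (i | i) <;> simp
  have hMunit := isUnit_of_memU22 h
  have : (Sum.elim (U *ᵥ v) v : Fin 2 ⊕ Fin 2 → ℂ) = 0 := by
    have := congrArg (fun w => M⁻¹ *ᵥ w) hMv
    simpa [Matrix.mulVec_mulVec,
      Matrix.nonsing_inv_mul M ((Matrix.isUnit_iff_isUnit_det M).mp hMunit)] using this
  exact hv (funext fun i => congrFun this (Sum.inr i))

theorem stmt17 :
    (∀ M : Mat22, memU22 M → ∀ U ∈ Matrix.unitaryGroup (Fin 2) ℂ,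
      IsUnit (M.toBlocks₂₁ * U + M.toBlocks₂₂) ∧
      fracAct M U ∈ Matrix.unitaryGroup (Fin 2) ℂ) ∧
    (∀ M M' : Mat22, memU22 M → memU22 M' →
      ∀ U ∈ Matrix.unitaryGroup (Fin 2) ℂ,
        fracAct (M * M') U = fracAct M (fracAct M' U)) := by
  have part1 : ∀ M : Mat22, memU22 M → ∀ U ∈ Matrix.unitaryGroup (Fin 2) ℂ,
      IsUnit (M.toBlocks₂₁ * U + M.toBlocks₂₂) ∧
      fracAct M U ∈ Matrix.unitaryGroup (Fin 2) ℂ := by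
    intro M hM U hU
    obtain ⟨h1, h2, h3, h4⟩ := blocks_eq hM
    set A := M.toBlocks₁₁
    set B := M.toBlocks₁₂
    set C := M.toBlocks₂₁
    set D := M.toBlocks₂₂
    have hN := denom_isUnit hM hU
    refine ⟨hN, ?_⟩
    have hUU : Uᴴ * U = 1 := by
      rw [← Matrix.star_eq_conjTranspose]
      exact (Matrix.mem_unitaryGroup_iff'.mp hU)
    have hkey := key_identity h1 h2 h3 h4 hUU
    rw [Matrix.mem_unitaryGroup_iff']
    have hNdet : IsUnit (C*U+D).det := (Matrix.isUnit_iff_isUnit_det _).mp hN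
    have hNHdet : IsUnit ((C*U+D)ᴴ).det := by
      rw [Matrix.det_conjTranspose]
      exact hNdet.star
    unfold fracAct
    rw [Matrix.star_eq_conjTranspose, Matrix.conjTranspose_mul,
      Matrix.conjTranspose_nonsing_inv]
    calc (C*U+D)ᴴ⁻¹ * (A*U+B)ᴴ * ((A*U+B) * (C*U+D)⁻¹)
        = (C*U+D)ᴴ⁻¹ * ((A*U+B)ᴴ * (A*U+B)) * (C*U+D)⁻¹ := by
          noncomm_ring
      _ = (C*U+D)ᴴ⁻¹ * ((C*U+D)ᴴ * (C*U+D)) * (C*U+D)⁻¹ := by rw [hkey]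
      _ = ((C*U+D)ᴴ⁻¹ * (C*U+D)ᴴ) * ((C*U+D) * (C*U+D)⁻¹) := by noncomm_ring
      _ = 1 := by rw [Matrix.nonsing_inv_mul _ hNHdet, Matrix.mul_nonsing_inv _ hNdet, one_mul]
  refine ⟨part1, ?_⟩
  intro M M' hM hM' U hU
  set A := M.toBlocks₁₁
  set B := M.toBlocks₁₂
  set C := M.toBlocks₂₁
  set D := M.toBlocks₂₂
  set A' := M'.toBlocks₁₁
  set B' := M'.toBlocks₁₂
  set C' := M'.toBlocks₂₁
  set D' := M'.toBlocks₂₂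
  have hN' := denom_isUnit hM' hU
  have hN'det : IsUnit (C'*U+D').det := (Matrix.isUnit_iff_isUnit_det _).mp hN'
  set U' := fracAct M' U with hU'def
  have hU'mem : U' ∈ Matrix.unitaryGroup (Fin 2) ℂ := (part1 M' hM' U hU).2
  have hN2 := denom_isUnit hM hU'mem
  have hN2det : IsUnit (C*U'+D).det := (Matrix.isUnit_iff_isUnit_det _).mp hN2
  -- blocks of the product
  have hMM : M * M' = fromBlocks (A*A' + B*C') (A*B' + B*D') (C*A' + D*C') (C*B' + D*D') := by
    conv_lhs => rw [← fromBlocks_toBlocks M, ← fromBlocks_toBlocks M']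
    rw [fromBlocks_multiply]
  have hP' : A'*U + B' = U' * (C'*U+D') := by
    rw [hU'def]
    unfold fracAct
    rw [Matrix.mul_assoc, Matrix.nonsing_inv_mul _ hN'det, Matrix.mul_one]
  have hnum : (M*M').toBlocks₁₁ * U + (M*M').toBlocks₁₂ = (A*U' + B) * (C'*U + D') := by
    rw [hMM, toBlocks_fromBlocks₁₁, toBlocks_fromBlocks₁₂]
    calc (A*A' + B*C') * U + (A*B' + B*D')
        = A * (A'*U + B') + B * (C'*U + D') := by noncomm_ring
      _ = A * (U' * (C'*U+D')) + B * (C'*U + D') := by rw [hP']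
      _ = (A*U' + B) * (C'*U + D') := by noncomm_ring
  have hden : (M*M').toBlocks₂₁ * U + (M*M').toBlocks₂₂ = (C*U' + D) * (C'*U + D') := by
    rw [hMM, toBlocks_fromBlocks₂₁, toBlocks_fromBlocks₂₂]
    calc (C*A' + D*C') * U + (C*B' + D*D')
        = C * (A'*U + B') + D * (C'*U + D') := by noncomm_ring
      _ = C * (U' * (C'*U+D')) + D * (C'*U + D') := by rw [hP']
      _ = (C*U' + D) * (C'*U + D') := by noncomm_ring
  show fracAct (M * M') U = fracAct M U'
  unfold fracAct
  rw [hnum, hden, Matrix.mul_inv_rev]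
  calc (A*U' + B) * (C'*U + D') * ((C'*U+D')⁻¹ * (C*U'+D)⁻¹)
      = (A*U' + B) * ((C'*U + D') * (C'*U+D')⁻¹) * (C*U'+D)⁻¹ := by noncomm_ring
    _ = (A*U' + B) * (C*U'+D)⁻¹ := by
        rw [Matrix.mul_nonsing_inv _ hN'det, Matrix.mul_one]
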